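/- arXiv:2604.25411 — 4 statements merged into one kernel-verified Lean document; each statement's English description precedes it below -/
import Mathlib

section
/- Let H be a finite-dimensional Hilbert space and A a linear operator on H such that ‖e^{tA}‖ ≤ C e^{ω₀ t} for all t ≥ 0 with ω₀ < 0 and C > 0. Then the Lyapunov operator 𝒜 : L(H) → L(H) defined by 𝒜(P) = A* P + P A is invertible, and its inverse is given by 𝒜^{-1}(M) = −∫₀^∞ e^{sA*} M e^{sA} ds, with ‖𝒜^{-1}(M)‖ ≤ (C²/(2|ω₀|)) ‖M‖ for all M ∈ L(H). -/
open ContinuousLinearMap MeasureTheory Filter Set Topology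

lemma my_tendsto_exp_mul {b : ℝ} (hb : b < 0) :
    Tendsto (fun s : ℝ => Real.exp (b * s)) atTop (𝓝 0) :=
  Real.tendsto_exp_atBot.comp ((tendsto_const_mul_atBot_of_neg hb).mpr tendsto_id)

lemma my_exp_integrable {b : ℝ} (hb : b < 0) :
    IntegrableOn (fun s : ℝ => Real.exp (b * s)) (Set.Ioi (0:ℝ)) := by
  have := exp_neg_integrableOn_Ioi 0 (b := -b) (by linarith)
  simpa using this

lemma my_integral_exp_Ioi {b : ℝ} (hb : b < 0) :
    ∫ s in Set.Ioi (0:ℝ), Real.exp (b * s) = -1 / b := by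
  have hderiv : ∀ x ∈ Set.Ici (0:ℝ),
      HasDerivAt (fun s => Real.exp (b * s) / b) (Real.exp (b * x)) x := by
    intro x _
    have h := ((Real.hasDerivAt_exp (b*x)).comp x ((hasDerivAt_id x).const_mul b))
    simpa [mul_comm, mul_div_assoc, mul_div_cancel_left₀ _ (ne_of_lt hb)] using h.div_const b
  have := MeasureTheory.integral_Ioi_of_hasDerivAt_of_tendsto'
    hderiv (my_exp_integrable hb) ((my_tendsto_exp_mul hb).div_const b)
  simpa [neg_div] using this

set_option maxHeartbeats 1000000 in
set_option synthInstance.maxHeartbeats 200000 in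
/-- The Lyapunov operator `𝒜(P) = A*P + PA` associated with an exponentially stable `A`
is invertible, with inverse `M ↦ -∫₀^∞ e^{sA*} M e^{sA} ds`, and
`‖𝒜⁻¹(M)‖ ≤ (C²/(2|ω₀|)) ‖M‖`. -/
theorem stmt_4 {H : Type*} [NormedAddCommGroup H] [InnerProductSpace ℂ H]
    [FiniteDimensional ℂ H] (A : H →L[ℂ] H) (C ω₀ : ℝ) (hC : 0 < C) (hω : ω₀ < 0)
    (hexp : ∀ t : ℝ, 0 ≤ t → ‖NormedSpace.exp (t • A)‖ ≤ C * Real.exp (ω₀ * t)) :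
    Function.Bijective (fun P : H →L[ℂ] H => adjoint A * P + P * A) ∧
    ∀ M : H →L[ℂ] H,
      (fun P : H →L[ℂ] H => adjoint A * P + P * A)
          (-(∫ s in Set.Ioi (0 : ℝ),
              adjoint (NormedSpace.exp (s • A)) * M * NormedSpace.exp (s • A))) = M ∧
      ‖-(∫ s in Set.Ioi (0 : ℝ),
          adjoint (NormedSpace.exp (s • A)) * M * NormedSpace.exp (s • A))‖ ≤
        C ^ 2 / (2 * |ω₀|) * ‖M‖ := by
  classical
  set B := adjoint A with hB
  have hexp_eq : (NormedSpace.exp : (H →L[ℂ] H) → (H →L[ℂ] H)) = NormedSpace.exp :=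
    rfl
  have hadj_exp : ∀ s : ℝ, adjoint (NormedSpace.exp (s • A))
      = NormedSpace.exp (s • B) := by
    intro s
    rw [← star_eq_adjoint, NormedSpace.star_exp, star_smul, star_trivial, star_eq_adjoint]
  have hnorm_adj : ∀ s : ℝ, ‖adjoint (NormedSpace.exp (s • A))‖
      = ‖NormedSpace.exp (s • A)‖ := fun s =>
    LinearIsometryEquiv.norm_map (adjoint : (H →L[ℂ] H) ≃ₗᵢ⋆[ℂ] (H →L[ℂ] H)) _
  have hDE : ∀ s : ℝ, HasDerivAt (fun t : ℝ => NormedSpace.exp (t • A))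
      (NormedSpace.exp (s • A) * A) s := by
    intro s
    simpa [hexp_eq] using hasDerivAt_exp_smul_const (𝕂 := ℝ) A s
  have hDE' : ∀ s : ℝ, HasDerivAt (fun t : ℝ => NormedSpace.exp (t • B))
      (B * NormedSpace.exp (s • B)) s := by
    intro s
    simpa [hexp_eq] using hasDerivAt_exp_smul_const' (𝕂 := ℝ) B s
  set F : (H →L[ℂ] H) → ℝ → (H →L[ℂ] H) := fun M s =>
    adjoint (NormedSpace.exp (s • A)) * M * NormedSpace.exp (s • A) with hF
  have hFeq : ∀ M s, F M s = NormedSpace.exp (s • B) * M * NormedSpace.exp (s • A) := by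
    intro M s; simp [hF, hadj_exp]
  have hDF : ∀ (M : H →L[ℂ] H) (s : ℝ),
      HasDerivAt (F M) (B * F M s + F M s * A) s := by
    intro M s
    have h1 : HasDerivAt (fun t => NormedSpace.exp (t • B) * M)
        (B * NormedSpace.exp (s • B) * M) s := (hDE' s).mul_const M
    have h2 := h1.mul (hDE s)
    have heq : F M = fun t => NormedSpace.exp (t • B) * M * NormedSpace.exp (t • A) := by
      funext t; exact hFeq M t
    have h3 : B * F M s + F M s * A
        = B * NormedSpace.exp (s • B) * M * NormedSpace.exp (s • A)
          + NormedSpace.exp (s • B) * M * (NormedSpace.exp (s • A) * A) := by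
      rw [hFeq]; noncomm_ring
    replace h2 : HasDerivAt (F M) (B * NormedSpace.exp (s • B) * M * NormedSpace.exp (s • A)
        + NormedSpace.exp (s • B) * M * (NormedSpace.exp (s • A) * A)) s := by
      rw [heq]; exact h2
    rw [h3]
    exact h2
  have hFnorm : ∀ (M : H →L[ℂ] H) (s : ℝ), 0 ≤ s →
      ‖F M s‖ ≤ C ^ 2 * ‖M‖ * Real.exp (2 * ω₀ * s) := by
    intro M s hs
    have h1 : ‖F M s‖ ≤ ‖NormedSpace.exp (s • A)‖ * ‖M‖ * ‖NormedSpace.exp (s • A)‖ := by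
      calc ‖F M s‖ ≤ ‖adjoint (NormedSpace.exp (s • A)) * M‖ * ‖NormedSpace.exp (s • A)‖ :=
            norm_mul_le _ _
        _ ≤ ‖adjoint (NormedSpace.exp (s • A))‖ * ‖M‖ * ‖NormedSpace.exp (s • A)‖ :=
            mul_le_mul_of_nonneg_right (norm_mul_le _ _) (norm_nonneg _)
        _ = ‖NormedSpace.exp (s • A)‖ * ‖M‖ * ‖NormedSpace.exp (s • A)‖ := by
            rw [hnorm_adj]
    have h2 := hexp s hs
    have hnn : (0:ℝ) ≤ ‖NormedSpace.exp (s • A)‖ * ‖M‖ :=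
      mul_nonneg (norm_nonneg _) (norm_nonneg _)
    calc ‖F M s‖ ≤ ‖NormedSpace.exp (s • A)‖ * ‖M‖ * ‖NormedSpace.exp (s • A)‖ := h1
      _ ≤ (C * Real.exp (ω₀ * s)) * ‖M‖ * (C * Real.exp (ω₀ * s)) :=
          mul_le_mul (mul_le_mul_of_nonneg_right h2 (norm_nonneg _)) h2 (norm_nonneg _)
            (by positivity)
      _ = C ^ 2 * ‖M‖ * Real.exp (2 * ω₀ * s) := by
          have he : Real.exp (2 * ω₀ * s) = Real.exp (ω₀ * s) * Real.exp (ω₀ * s) := by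
            rw [← Real.exp_add]; ring_nf
          rw [he]; ring
  have h2ω : (2 : ℝ) * ω₀ < 0 := by linarith
  have hFint : ∀ M : H →L[ℂ] H, IntegrableOn (F M) (Set.Ioi (0:ℝ)) := by
    intro M
    refine Integrable.mono' ((my_exp_integrable h2ω).const_mul (C ^ 2 * ‖M‖)) ?_ ?_
    · exact (Continuous.aestronglyMeasurable
        (continuous_iff_continuousAt.2 fun s => (hDF M s).continuousAt)).restrict
    · filter_upwards [ae_restrict_mem measurableSet_Ioi] with s hs
      exact hFnorm M s (le_of_lt hs)
  set L : (H →L[ℂ] H) →L[ℂ] (H →L[ℂ] H) :=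
    ContinuousLinearMap.mul ℂ (H →L[ℂ] H) B
      + (ContinuousLinearMap.mul ℂ (H →L[ℂ] H)).flip A with hL
  have hLapp : ∀ P, L P = B * P + P * A := fun P => rfl
  have hFtend : ∀ M : H →L[ℂ] H, Tendsto (F M) atTop (𝓝 0) := by
    intro M
    have hg : Tendsto (fun s => C ^ 2 * ‖M‖ * Real.exp (2 * ω₀ * s)) atTop (𝓝 0) := by
      simpa using (my_tendsto_exp_mul h2ω).const_mul (C ^ 2 * ‖M‖)
    refine squeeze_zero_norm' ?_ hg
    filter_upwards [eventually_ge_atTop (0:ℝ)] with s hs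
    exact hFnorm M s hs
  have hkey : ∀ M : H →L[ℂ] H, L (∫ s in Set.Ioi (0:ℝ), F M s) = -M := by
    intro M
    have hLint : IntegrableOn (fun s => L (F M s)) (Set.Ioi (0:ℝ)) :=
      L.integrable_comp (hFint M)
    have hcomm : ∫ s in Set.Ioi (0:ℝ), L (F M s) = L (∫ s in Set.Ioi (0:ℝ), F M s) :=
      L.integral_comp_comm (hFint M)
    have hderiv : ∀ x ∈ Set.Ici (0:ℝ), HasDerivAt (F M) (L (F M x)) x := by
      intro x _; rw [hLapp]; exact hDF M x
    have hFTC := MeasureTheory.integral_Ioi_of_hasDerivAt_of_tendsto'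
      hderiv hLint (hFtend M)
    have hF0 : F M 0 = M := by
      show adjoint (NormedSpace.exp ((0:ℝ) • A)) * M * NormedSpace.exp ((0:ℝ) • A) = M
      rw [zero_smul, NormedSpace.exp_zero, ← star_eq_adjoint, star_one, one_mul, mul_one]
    rw [← hcomm, hFTC, hF0, zero_sub]
  have hinv : ∀ M : H →L[ℂ] H,
      (fun P : H →L[ℂ] H => adjoint A * P + P * A)
        (-(∫ s in Set.Ioi (0:ℝ), F M s)) = M := by
    intro M
    have h := hkey M
    rw [hLapp] at h
    simp only [mul_neg, neg_mul]
    rw [← neg_add, ← hB, h, neg_neg]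
  constructor
  · have hfun : (fun P : H →L[ℂ] H => adjoint A * P + P * A) = ⇑L := by
      funext P; rw [hLapp, hB]
    rw [hfun]
    have hsurj : Function.Surjective (⇑L) := fun M =>
      ⟨-(∫ s in Set.Ioi (0:ℝ), F M s), by rw [← hfun]; exact hinv M⟩
    have hinj : Function.Injective (⇑L) :=
      (LinearMap.injective_iff_surjective (f := (L : (H →L[ℂ] H) →ₗ[ℂ] (H →L[ℂ] H)))).2 hsurj
    exact ⟨hinj, hsurj⟩
  · intro M
    refine ⟨hinv M, ?_⟩
    rw [norm_neg]
    calc ‖∫ s in Set.Ioi (0:ℝ), F M s‖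
        ≤ ∫ s in Set.Ioi (0:ℝ), C ^ 2 * ‖M‖ * Real.exp (2 * ω₀ * s) := by
          apply norm_integral_le_of_norm_le ((my_exp_integrable h2ω).const_mul (C ^ 2 * ‖M‖))
          filter_upwards [ae_restrict_mem measurableSet_Ioi] with s hs
          exact hFnorm M s (le_of_lt hs)
      _ = C ^ 2 * ‖M‖ * (-1 / (2 * ω₀)) := by
          rw [MeasureTheory.integral_const_mul, my_integral_exp_Ioi h2ω]
      _ = C ^ 2 / (2 * |ω₀|) * ‖M‖ := by
          rw [abs_of_neg hω]; field_simp
end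

section
/- Let H be a Hilbert space, λ > 0, S a bounded non-negative self-adjoint operator on H, and define the time-varying coefficient S̄(t) = e^{2λt} S. Then for every non-negative self-adjoint P₀ ∈ L(H), the solution of P̄'(t) = −P̄(t) S̄(t) P̄(t), P̄(0) = P₀, is given by P̄(t) = ( I + ((e^{2λt} − 1)/(2λ)) P₀ S )^{-1} P₀, whenever the indicated inverse exists. -/
open ContinuousLinearMap
open scoped InnerProductSpace

/-- The solution of `P̄' = -P̄ S̄(t) P̄`, `P̄(0) = P₀`, with `S̄(t) = e^{2λt} S`, is given by
`P̄(t) = (I + ((e^{2λt} - 1)/(2λ)) P₀ S)⁻¹ P₀`, whenever the indicated inverse exists. -/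
theorem stmt_11 {H : Type*} [NormedAddCommGroup H] [InnerProductSpace ℂ H] [CompleteSpace H]
    (S P₀ : H →L[ℂ] H) (hSsa : IsSelfAdjoint S) (hP₀sa : IsSelfAdjoint P₀)
    (hSpos : ∀ x : H, 0 ≤ (⟪S x, x⟫_ℂ).re) (hP₀pos : ∀ x : H, 0 ≤ (⟪P₀ x, x⟫_ℂ).re)
    (l : ℝ) (hl : 0 < l) :
    (fun t : ℝ =>
        Ring.inverse (1 + ((Real.exp (2 * l * t) - 1) / (2 * l)) • (P₀ * S)) * P₀) 0 = P₀ ∧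
    ∀ t : ℝ,
      IsUnit (1 + ((Real.exp (2 * l * t) - 1) / (2 * l)) • (P₀ * S)) →
      HasDerivAt
        (fun t : ℝ =>
          Ring.inverse (1 + ((Real.exp (2 * l * t) - 1) / (2 * l)) • (P₀ * S)) * P₀)
        (-((Ring.inverse (1 + ((Real.exp (2 * l * t) - 1) / (2 * l)) • (P₀ * S)) * P₀) *
            (Real.exp (2 * l * t) • S) *
            (Ring.inverse (1 + ((Real.exp (2 * l * t) - 1) / (2 * l)) • (P₀ * S)) * P₀))) t := by
  constructor
  · simp
  · intro t hu
    set M : H →L[ℂ] H := P₀ * S with hM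
    set A : ℝ → (H →L[ℂ] H) := fun t => 1 + ((Real.exp (2 * l * t) - 1) / (2 * l)) • M with hA
    have hf : HasDerivAt (fun t : ℝ => (Real.exp (2 * l * t) - 1) / (2 * l))
        (Real.exp (2 * l * t)) t := by
      have h1 : HasDerivAt (fun t : ℝ => 2 * l * t) (2 * l) t := by
        simpa using (hasDerivAt_id t).const_mul (2 * l)
      have h2 := h1.exp
      have h3 := (h2.sub_const 1).div_const (2 * l)
      have : Real.exp (2 * l * t) * (2 * l) / (2 * l) = Real.exp (2 * l * t) := by
        field_simp
      rwa [this] at h3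
    have hAder : HasDerivAt A (Real.exp (2 * l * t) • M) t := (hf.smul_const M).const_add 1
    have hinv := (hasFDerivAt_ringInverse (𝕜 := ℝ) hu.unit)
    rw [IsUnit.unit_spec] at hinv
    have hcomp := hinv.comp_hasDerivAt t hAder
    have hmul := hcomp.mul_const P₀
    refine hmul.congr_deriv ?_
    have hinvval : Ring.inverse (1 + ((Real.exp (2 * l * t) - 1) / (2 * l)) • M)
        = (↑hu.unit⁻¹ : H →L[ℂ] H) := by
      simp only [Ring.inverse, dif_pos hu]
    simp only [mulLeftRight_apply, ContinuousLinearMap.neg_apply, ← hinvval, hM,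
      smul_mul_assoc, mul_smul_comm, neg_mul]
    simp only [mul_assoc]
end

section
/- Let H be a Hilbert space and S, M₀ bounded non-negative self-adjoint operators on H with ‖M₀‖ ≤ ρ, and suppose I + t S M₀ is invertible with ‖(I + tSM₀)^{-1}M₀‖ ≤ (1+Tρ‖S‖)ρ for all t ∈ [0,T]. Then the j-th derivative of t ↦ M(t) = (I + t S M₀)^{-1} M₀ satisfies ‖M^{(j)}(t)‖ ≤ j! ‖S‖^j (1 + T ρ ‖S‖)^{j+1} ρ^{j+1} for all t ∈ [0,T] and all j ≥ 1. -/
open ContinuousLinearMap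
open scoped InnerProductSpace ENNReal

lemma aux_specRad_mul_comm {A : Type*} [NormedRing A] [NormedAlgebra ℂ A] (a b : A) :
    spectralRadius ℂ (a * b) = spectralRadius ℂ (b * a) := by
  have key : ∀ x y : A, spectralRadius ℂ (x * y) ≤ spectralRadius ℂ (y * x) := by
    intro x y
    rw [spectralRadius, spectralRadius]
    refine iSup₂_le fun k hk => ?_
    rcases eq_or_ne k 0 with rfl | hk0
    · simp
    · have : k ∈ spectrum ℂ (y * x) \ {0} := by
        rw [← spectrum.nonzero_mul_comm]
        exact ⟨hk, hk0⟩
      exact le_iSup₂ (f := fun k (_ : k ∈ spectrum ℂ (y * x)) => (‖k‖₊ : ℝ≥0∞)) k this.1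
  exact le_antisymm (key a b) (key b a)

lemma aux_norm_mul_comm_le {A : Type*} [CStarAlgebra A] [NormOneClass A] (a b : A)
    (ha : IsSelfAdjoint (a * b)) : ‖a * b‖ ≤ ‖b * a‖ := by
  have h1 : (‖a * b‖₊ : ℝ≥0∞) = spectralRadius ℂ (b * a) := by
    rw [← aux_specRad_mul_comm, ha.spectralRadius_eq_nnnorm]
  have h2 := spectrum.spectralRadius_le_nnnorm (𝕜 := ℂ) (b * a)
  have : (‖a * b‖₊ : ℝ≥0∞) ≤ (‖b * a‖₊ : ℝ≥0∞) := h1 ▸ h2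
  exact_mod_cast this

set_option maxHeartbeats 1000000 in
/-- Bounds on all higher derivatives of the nonlinear flow `M(t) = (I + t S M₀)⁻¹ M₀`:
`‖M^{(j)}(t)‖ ≤ j! ‖S‖^j (1 + Tρ‖S‖)^{j+1} ρ^{j+1}` for `j ≥ 1` and `t ∈ [0,T]`. -/
theorem stmt_17 {H : Type*} [NormedAddCommGroup H] [InnerProductSpace ℂ H] [CompleteSpace H]
    (S M₀ : H →L[ℂ] H) (hSsa : IsSelfAdjoint S) (hM₀sa : IsSelfAdjoint M₀)
    (hSpos : ∀ x : H, 0 ≤ (⟪S x, x⟫_ℂ).re) (hM₀pos : ∀ x : H, 0 ≤ (⟪M₀ x, x⟫_ℂ).re)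
    (ρ T : ℝ) (hρ : ‖M₀‖ ≤ ρ) (hT : 0 < T)
    (hunit : ∀ t ∈ Set.Icc (0 : ℝ) T, IsUnit (1 + t • (S * M₀)))
    (hbound : ∀ t ∈ Set.Icc (0 : ℝ) T,
      ‖Ring.inverse (1 + t • (S * M₀)) * M₀‖ ≤ (1 + T * ρ * ‖S‖) * ρ) :
    ∀ j : ℕ, 1 ≤ j → ∀ t ∈ Set.Icc (0 : ℝ) T,
      ‖iteratedDerivWithin j (fun t : ℝ => Ring.inverse (1 + t • (S * M₀)) * M₀)
          (Set.Icc (0 : ℝ) T) t‖ ≤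
        (j.factorial : ℝ) * ‖S‖ ^ j * (1 + T * ρ * ‖S‖) ^ (j + 1) * ρ ^ (j + 1) := by
  have hρ0 : (0 : ℝ) ≤ ρ := le_trans (norm_nonneg _) hρ
  have hC0 : (0 : ℝ) ≤ 1 + T * ρ * ‖S‖ := by positivity
  intro j hj t ht
  rcases subsingleton_or_nontrivial H with hH | hH
  · have h0 : iteratedDerivWithin j (fun t : ℝ => Ring.inverse (1 + t • (S * M₀)) * M₀)
        (Set.Icc (0 : ℝ) T) t = 0 := Subsingleton.elim _ _
    rw [h0, norm_zero]
    positivity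
  set A := S * M₀ with hA
  set s : Set ℝ := Set.Icc (0 : ℝ) T with hs
  -- commutation of A with the inverse
  have hcomm : ∀ r ∈ s, Commute A (Ring.inverse (1 + r • A)) := by
    intro r hr
    obtain ⟨v, hv⟩ := hunit r hr
    have h1 : Commute A (1 + r • A) :=
      (Commute.one_right A).add_right ((Commute.refl A).smul_right r)
    rw [← hv] at h1 ⊢
    rw [Ring.inverse_unit]
    exact h1.units_inv_right
  -- derivative of the inverse
  have hgderiv : ∀ r ∈ s, HasDerivAt (fun x : ℝ => Ring.inverse (1 + x • A))
      (-(Ring.inverse (1 + r • A) * A * Ring.inverse (1 + r • A))) r := by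
    intro r hr
    obtain ⟨v, hv⟩ := hunit r hr
    have hu1 : HasDerivAt (fun x : ℝ => x • A) ((1 : ℝ) • A) r :=
      (hasDerivAt_id r).smul_const A
    have hu : HasDerivAt (fun x : ℝ => 1 + x • A) A r := by
      simpa using hu1.const_add (1 : H →L[ℂ] H)
    have hinv : HasFDerivAt Ring.inverse
        (-(mulLeftRight ℝ (H →L[ℂ] H) ↑v⁻¹ ↑v⁻¹)) (1 + r • A) :=
      hv ▸ hasFDerivAt_ringInverse (𝕜 := ℝ) v
    have hcomp := hinv.comp_hasDerivAt r hu
    have hval : Ring.inverse (1 + r • A) = (↑v⁻¹ : H →L[ℂ] H) := by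
      rw [← hv, Ring.inverse_unit]
    simpa [Function.comp_def, hval, mulLeftRight_apply] using hcomp
  -- derivative of powers of the inverse
  have hpow : ∀ n : ℕ, ∀ r ∈ s, HasDerivAt (fun x : ℝ => (Ring.inverse (1 + x • A)) ^ n)
      ((-(n : ℝ)) • ((Ring.inverse (1 + r • A)) ^ (n + 1) * A)) r := by
    intro n
    induction n with
    | zero => intro r hr; simpa using hasDerivAt_const r (1 : H →L[ℂ] H)
    | succ n ihn =>
      intro r hr
      have h1 := (ihn r hr).mul (hgderiv r hr)
      simp only [Pi.mul_def, ← pow_succ] at h1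
      set R := Ring.inverse (1 + r • A) with hR
      have hc : A * R = R * A := (hcomm r hr).eq
      have e1 : R ^ (n + 1) * A * R = R ^ (n + 2) * A := by
        rw [mul_assoc, hc, ← mul_assoc, ← pow_succ]
      have e2 : R ^ n * (R * A * R) = R ^ (n + 2) * A := by
        simp only [← mul_assoc]
        rw [← pow_succ, e1]
      have : (-(n : ℝ)) • (R ^ (n + 1) * A) * R + R ^ n * -(R * A * R)
          = (-((n + 1 : ℕ) : ℝ)) • (R ^ (n + 1 + 1) * A) := by
        rw [smul_mul_assoc, e1, mul_neg, e2]
        push_cast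
        module
      exact this ▸ h1
  -- the explicit form of the iterated derivatives
  have hmain : ∀ n : ℕ, Set.EqOn
      (iteratedDerivWithin n (fun x : ℝ => Ring.inverse (1 + x • A) * M₀) s)
      (fun x => (((-1 : ℝ) ^ n * n.factorial)) •
        ((Ring.inverse (1 + x • A)) ^ (n + 1) * (A ^ n * M₀))) s := by
    intro n
    induction n with
    | zero => intro r hr; simp
    | succ n ihn =>
      intro r hr
      have hud : UniqueDiffWithinAt ℝ s r := (uniqueDiffOn_Icc hT) r hr
      have hder : HasDerivAt (fun x : ℝ =>
          ((-1 : ℝ) ^ n * n.factorial) • ((Ring.inverse (1 + x • A)) ^ (n + 1) * (A ^ n * M₀)))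
          (((-1 : ℝ) ^ n * n.factorial) • ((-((n + 1 : ℕ) : ℝ)) •
            ((Ring.inverse (1 + r • A)) ^ (n + 2) * (A ^ (n + 1) * M₀)))) r := by
       have h2 := ((hpow (n + 1) r hr).mul_const (A ^ n * M₀)).const_smul
          ((-1 : ℝ) ^ n * (n.factorial : ℝ))
       have e3 : (Ring.inverse (1 + r • A)) ^ (n + 1 + 1) * A * (A ^ n * M₀)
            = (Ring.inverse (1 + r • A)) ^ (n + 2) * (A ^ (n + 1) * M₀) := by
          rw [mul_assoc, ← mul_assoc A, ← pow_succ']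
       rw [smul_mul_assoc, e3] at h2
       push_cast at h2 ⊢
       exact h2
      rw [iteratedDerivWithin_succ, derivWithin_congr ihn (ihn hr),
        hder.hasDerivWithinAt.derivWithin hud, smul_smul]
      congr 1
      push_cast [Nat.factorial_succ, pow_succ]
      ring
  rw [hmain j ht, norm_smul]
  have hnc : ‖(-1 : ℝ) ^ j * (j.factorial : ℝ)‖ = (j.factorial : ℝ) := by
    simp [abs_mul, abs_pow]
  rw [hnc]
  set R := Ring.inverse (1 + t • A) with hR
  -- self-adjointness of M₀ * R and the norm bound on it
  have hstar : star (1 + t • A) = 1 + t • (M₀ * S) := by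
    simp [hA, star_smul, hSsa.star_eq, hM₀sa.star_eq]
  have hwunit : IsUnit (1 + t • (M₀ * S)) := by
    rw [← hstar]; exact (hunit t ht).star
  have hswap : Ring.inverse (1 + t • (M₀ * S)) * M₀ = M₀ * R := by
    obtain ⟨v, hv⟩ := hunit t ht
    obtain ⟨w, hw⟩ := hwunit
    have key : (1 + t • (M₀ * S)) * M₀ = M₀ * (1 + t • A) := by
      simp only [hA, add_mul, mul_add, one_mul, mul_one, smul_mul_assoc, mul_smul_comm,
        mul_assoc]
    have h2 : (↑w : H →L[ℂ] H) * M₀ = M₀ * ↑v := by rw [hv, hw]; exact key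
    rw [hR, ← hv, ← hw, Ring.inverse_unit, Ring.inverse_unit]
    calc (↑w⁻¹ : H →L[ℂ] H) * M₀ = ↑w⁻¹ * (M₀ * ↑v) * ↑v⁻¹ := by
          rw [mul_assoc, mul_assoc, Units.mul_inv, mul_one]
      _ = ↑w⁻¹ * (↑w * M₀) * ↑v⁻¹ := by rw [h2]
      _ = M₀ * ↑v⁻¹ := by
          simp only [← mul_assoc]
          rw [Units.inv_mul, one_mul]
  have hsa : IsSelfAdjoint (M₀ * R) := by
    rw [IsSelfAdjoint, star_mul, hM₀sa.star_eq, hR, ← Ring.inverse_star, hstar]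
    exact hswap
  have hP : ‖M₀ * R‖ ≤ (1 + T * ρ * ‖S‖) * ρ :=
    (aux_norm_mul_comm_le M₀ R hsa).trans (hbound t ht)
  have hQ : ‖R * M₀‖ ≤ (1 + T * ρ * ‖S‖) * ρ := hbound t ht
  -- rewrite E j t and estimate
  have hco : Commute A R := hcomm t ht
  have h3 : R ^ (j + 1) * (A ^ j * M₀) = (A * R) ^ j * (R * M₀) := by
    rw [hco.mul_pow, mul_assoc, ← mul_assoc (R ^ j) R M₀, ← pow_succ, ← mul_assoc,
      ((hco.symm).pow_pow (j + 1) j).eq, mul_assoc]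
  rw [h3]
  have h4 : ‖(A * R) ^ j * (R * M₀)‖ ≤ (‖S‖ * ((1 + T * ρ * ‖S‖) * ρ)) ^ j
      * ((1 + T * ρ * ‖S‖) * ρ) := by
    calc ‖(A * R) ^ j * (R * M₀)‖ ≤ ‖A * R‖ ^ j * ‖R * M₀‖ :=
          (norm_mul_le _ _).trans
            (mul_le_mul_of_nonneg_right (norm_pow_le _ j) (norm_nonneg _))
      _ ≤ (‖S‖ * ((1 + T * ρ * ‖S‖) * ρ)) ^ j * ((1 + T * ρ * ‖S‖) * ρ) := by
          have hAR : ‖A * R‖ ≤ ‖S‖ * ((1 + T * ρ * ‖S‖) * ρ) := by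
            calc ‖A * R‖ = ‖S * (M₀ * R)‖ := by rw [hA, mul_assoc]
              _ ≤ ‖S‖ * ‖M₀ * R‖ := norm_mul_le _ _
              _ ≤ ‖S‖ * ((1 + T * ρ * ‖S‖) * ρ) :=
                  mul_le_mul_of_nonneg_left hP (norm_nonneg _)
          exact mul_le_mul (pow_le_pow_left₀ (norm_nonneg _) hAR j) hQ (norm_nonneg _)
            (by positivity)
  calc (j.factorial : ℝ) * ‖(A * R) ^ j * (R * M₀)‖
      ≤ (j.factorial : ℝ) * ((‖S‖ * ((1 + T * ρ * ‖S‖) * ρ)) ^ j * ((1 + T * ρ * ‖S‖) * ρ)) :=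
        mul_le_mul_of_nonneg_left h4 (by positivity)
    _ = (j.factorial : ℝ) * ‖S‖ ^ j * (1 + T * ρ * ‖S‖) ^ (j + 1) * ρ ^ (j + 1) := by
        rw [mul_pow, mul_pow]
        ring
end

section
/- Let H be a finite-dimensional Hilbert space and suppose P : [0,T] → L(H) is differentiable and solves P'(t) = 𝒜P(t) + Q − P(t)SP(t) with P(0) = P₀, where 𝒜(P) = A*P + PA and ‖e^{t𝒜}M‖ ≤ C‖M‖ for all t ∈ [0,T] and M ∈ L(H). If ‖P(t)‖ ≤ γ on [0,T], then V := P' satisfies ‖V(t)‖ ≤ C(‖𝒜P₀ + Q − P₀SP₀‖) e^{2Cγ‖S‖ t} for all t ∈ [0,T]. -/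
open ContinuousLinearMap

set_option maxHeartbeats 1000000
set_option synthInstance.maxHeartbeats 200000

/-- Bound on the derivative of a Riccati solution: if `P` solves `P' = 𝒜P + Q - PSP` with
`P(0) = P₀`, `‖P(t)‖ ≤ γ` and `‖e^{t𝒜}M‖ ≤ C‖M‖` on `[0,T]`, then `V = P'` satisfies
`‖V(t)‖ ≤ C ‖𝒜P₀ + Q - P₀SP₀‖ e^{2Cγ‖S‖t}`. -/
theorem stmt_18 {H : Type*} [NormedAddCommGroup H] [InnerProductSpace ℂ H]
    [FiniteDimensional ℂ H] (A Q S : H →L[ℂ] H) (C γ T : ℝ) (hC : 0 < C) (hγ : 0 < γ)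
    (hT : 0 < T)
    (hsg : ∀ t ∈ Set.Icc (0 : ℝ) T, ∀ M : H →L[ℂ] H,
      ‖adjoint (NormedSpace.exp (t • A)) * M * NormedSpace.exp (t • A)‖ ≤ C * ‖M‖)
    (P : ℝ → H →L[ℂ] H) (P₀ : H →L[ℂ] H) (hP0 : P 0 = P₀)
    (hP : ∀ t ∈ Set.Icc (0 : ℝ) T,
      HasDerivAt P (adjoint A * P t + P t * A + Q - P t * S * P t) t)
    (hbound : ∀ t ∈ Set.Icc (0 : ℝ) T, ‖P t‖ ≤ γ) :
    ∀ t ∈ Set.Icc (0 : ℝ) T,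
      ‖adjoint A * P t + P t * A + Q - P t * S * P t‖ ≤
        C * ‖adjoint A * P₀ + P₀ * A + Q - P₀ * S * P₀‖ *
          Real.exp (2 * C * γ * ‖S‖ * t) := by
  have hT0 : (0:ℝ) ≤ T := hT.le
  set B := adjoint A with hB
  set V : ℝ → H →L[ℂ] H := fun t => B * P t + P t * A + Q - P t * S * P t with hVdef
  have hPV : ∀ t ∈ Set.Icc (0:ℝ) T, HasDerivAt P (V t) t := hP
  have hPc : ContinuousOn P (Set.Icc 0 T) :=
    fun s hs => ((hPV s hs).continuousAt).continuousWithinAt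
  have hVc : ContinuousOn V (Set.Icc 0 T) := by
    apply ContinuousOn.sub
    · exact ((continuousOn_const.mul hPc).add (hPc.mul continuousOn_const)).add continuousOn_const
    · exact (hPc.mul continuousOn_const).mul hPc
  set W : ℝ → H →L[ℂ] H := fun s => V s * S * P s + P s * S * V s with hWdef
  have hVd : ∀ s ∈ Set.Icc (0:ℝ) T, HasDerivAt V (B * V s + V s * A - W s) s := by
    intro s hs
    have h := hPV s hs
    have h1 : HasDerivAt (fun u => B * P u) (B * V s) s := h.const_mul B
    have h2 : HasDerivAt (fun u => P u * A) (V s * A) s := h.mul_const A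
    have h3 : HasDerivAt (fun u => P u * S * P u) (V s * S * P s + P s * S * V s) s :=
      (h.mul_const S).mul h
    exact ((h1.add h2).add_const Q).sub h3
  have hWc : ContinuousOn W (Set.Icc 0 T) :=
    ((hVc.mul continuousOn_const).mul hPc).add ((hPc.mul continuousOn_const).mul hVc)
  have hadj : ∀ u : ℝ, adjoint (NormedSpace.exp (u • A)) = NormedSpace.exp (u • B) := by
    intro u
    rw [← star_eq_adjoint, NormedSpace.star_exp]
    congr 1
    rw [star_smul, star_trivial, star_eq_adjoint]
  set ε := C * ‖V 0‖ with hεdef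
  have hε0 : 0 ≤ ε := mul_nonneg hC.le (norm_nonneg _)
  set K := 2 * C * γ * ‖S‖ with hKdef
  have hK0 : 0 ≤ K := by positivity
  -- key integral inequality via variation of constants
  have main : ∀ t ∈ Set.Icc (0:ℝ) T, ‖V t‖ ≤ ε + ∫ s in (0:ℝ)..t, K * ‖V s‖ := by
    intro t ht
    obtain ⟨ht0, htT⟩ := ht
    have hIcc : Set.Icc (0:ℝ) t ⊆ Set.Icc 0 T := Set.Icc_subset_Icc le_rfl htT
    set E1 : ℝ → H →L[ℂ] H := fun s => NormedSpace.exp ((t - s) • B) with hE1def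
    set E2 : ℝ → H →L[ℂ] H := fun s => NormedSpace.exp ((t - s) • A) with hE2def
    set g : ℝ → H →L[ℂ] H := fun s => E1 s * V s * E2 s with hgdef
    set w : ℝ → H →L[ℂ] H := fun s => -(E1 s * W s * E2 s) with hwdef
    have hE1c : Continuous E1 :=
      continuous_iff_continuousAt.2 fun _ =>
        (NormedSpace.exp_analytic (𝕂 := ℂ) _).continuousAt.comp (by fun_prop)
    have hE2c : Continuous E2 :=
      continuous_iff_continuousAt.2 fun _ =>
        (NormedSpace.exp_analytic (𝕂 := ℂ) _).continuousAt.comp (by fun_prop)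
    have hgd : ∀ s ∈ Set.Icc (0:ℝ) t, HasDerivAt g (w s) s := by
      intro s hs
      have hco1 : B * E1 s = E1 s * B :=
        (((Commute.refl B).smul_right (t - s)).exp_right).eq
      have hco2 : A * E2 s = E2 s * A :=
        (((Commute.refl A).smul_right (t - s)).exp_right).eq
      have hinner : HasDerivAt (fun x : ℝ => t - x) (-1) s := by
        simpa using (hasDerivAt_id s).const_sub t
      have hexp_eq : ∀ (X : H →L[ℂ] H), NormedSpace.exp X = NormedSpace.exp X := by
        intro X
        rfl
      have hd1 : HasDerivAt E1 (-(B * E1 s)) s := by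
        have h := (hasDerivAt_exp_smul_const' (𝕂 := ℝ) B (t - s)).scomp s hinner
        simp only [Function.comp_def, hexp_eq, neg_smul, one_smul] at h
        exact h
      have hd2 : HasDerivAt E2 (-(E2 s * A)) s := by
        have h := (hasDerivAt_exp_smul_const (𝕂 := ℝ) A (t - s)).scomp s hinner
        simp only [Function.comp_def, hexp_eq, neg_smul, one_smul] at h
        exact h
      have hgd' := (hd1.mul (hVd s (hIcc hs))).mul hd2
      have harr : (-(B * E1 s) * V s + E1 s * (B * V s + V s * A - W s)) * E2 s
          + E1 s * V s * -(E2 s * A) = w s := by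
        rw [hwdef, ← hco2, hco1]
        noncomm_ring
      rw [show (E1 * V * E2) = g from rfl, show (E1 * V) s = E1 s * V s from rfl, harr] at hgd'
      exact hgd'
    have huIcc : Set.uIcc (0:ℝ) t = Set.Icc 0 t := Set.uIcc_of_le ht0
    have hwc : ContinuousOn w (Set.Icc 0 t) :=
      ((hE1c.continuousOn.mul (hWc.mono hIcc)).mul hE2c.continuousOn).neg
    have hInt : IntervalIntegrable w MeasureTheory.volume 0 t :=
      (huIcc ▸ hwc).intervalIntegrable
    have hftc : ∫ s in (0:ℝ)..t, w s = g t - g 0 :=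
      intervalIntegral.integral_eq_sub_of_hasDerivAt
        (fun s hs => hgd s (huIcc ▸ hs)) hInt
    have hgt : g t = V t := by
      simp only [hgdef, hE1def, hE2def, sub_self, zero_smul, NormedSpace.exp_zero,
        one_mul, mul_one]
    have hg0 : ‖g 0‖ ≤ ε := by
      have h := hsg t ⟨ht0, htT⟩ (V 0)
      rw [hadj t] at h
      simpa [hgdef, hE1def, hE2def] using h
    have hwb : ∀ s ∈ Set.Icc (0:ℝ) t, ‖w s‖ ≤ K * ‖V s‖ := by
      intro s hs
      have hts : t - s ∈ Set.Icc (0:ℝ) T := ⟨by linarith [hs.2], by linarith [hs.1]⟩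
      have h1 := hsg (t - s) hts (W s)
      rw [hadj] at h1
      have hPb := hbound s (hIcc hs)
      have e1 : ‖V s * S * P s‖ ≤ ‖V s‖ * ‖S‖ * γ := by
        calc ‖V s * S * P s‖ ≤ ‖V s * S‖ * ‖P s‖ := norm_mul_le _ _
        _ ≤ ‖V s‖ * ‖S‖ * γ :=
            mul_le_mul (norm_mul_le _ _) hPb (norm_nonneg _)
              (mul_nonneg (norm_nonneg _) (norm_nonneg _))
      have e2 : ‖P s * S * V s‖ ≤ γ * ‖S‖ * ‖V s‖ := by
        calc ‖P s * S * V s‖ ≤ ‖P s * S‖ * ‖V s‖ := norm_mul_le _ _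
        _ ≤ γ * ‖S‖ * ‖V s‖ :=
            mul_le_mul_of_nonneg_right
              ((norm_mul_le _ _).trans (mul_le_mul_of_nonneg_right hPb (norm_nonneg S)))
              (norm_nonneg _)
      have e3 : ‖W s‖ ≤ 2 * γ * ‖S‖ * ‖V s‖ := by
        calc ‖W s‖ ≤ ‖V s * S * P s‖ + ‖P s * S * V s‖ := norm_add_le _ _
        _ ≤ ‖V s‖ * ‖S‖ * γ + γ * ‖S‖ * ‖V s‖ := add_le_add e1 e2
        _ = 2 * γ * ‖S‖ * ‖V s‖ := by ring
      calc ‖w s‖ = ‖E1 s * W s * E2 s‖ := norm_neg _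
      _ ≤ C * ‖W s‖ := h1
      _ ≤ C * (2 * γ * ‖S‖ * ‖V s‖) := mul_le_mul_of_nonneg_left e3 hC.le
      _ = K * ‖V s‖ := by rw [hKdef]; ring
    have hVcont : ContinuousOn (fun s => K * ‖V s‖) (Set.Icc 0 t) :=
      continuousOn_const.mul (hVc.mono hIcc).norm
    have hintmono : ∫ s in (0:ℝ)..t, ‖w s‖ ≤ ∫ s in (0:ℝ)..t, K * ‖V s‖ := by
      apply intervalIntegral.integral_mono_on ht0 hInt.norm
        ((huIcc ▸ hVcont).intervalIntegrable)
      intro s hs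
      exact hwb s hs
    calc ‖V t‖ = ‖g t‖ := by rw [hgt]
    _ = ‖g 0 + (g t - g 0)‖ := by rw [add_sub_cancel]
    _ ≤ ‖g 0‖ + ‖g t - g 0‖ := norm_add_le _ _
    _ = ‖g 0‖ + ‖∫ s in (0:ℝ)..t, w s‖ := by rw [hftc]
    _ ≤ ‖g 0‖ + ∫ s in (0:ℝ)..t, ‖w s‖ := by
        gcongr
        exact intervalIntegral.norm_integral_le_integral_norm ht0
    _ ≤ ε + ∫ s in (0:ℝ)..t, K * ‖V s‖ := add_le_add hg0 hintmono
  -- Grönwall argument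
  set n : ℝ → ℝ := fun s => ‖V s‖ with hndef
  have hnc : ContinuousOn n (Set.Icc 0 T) := hVc.norm
  have huT : Set.uIcc (0:ℝ) T = Set.Icc 0 T := Set.uIcc_of_le hT0
  have hnint : IntervalIntegrable n MeasureTheory.volume 0 T :=
    (huT ▸ hnc).intervalIntegrable
  set F : ℝ → ℝ := fun x => ∫ s in (0:ℝ)..x, n s with hFdef
  have hFc : ContinuousOn F (Set.Icc 0 T) := by
    have := intervalIntegral.continuousOn_primitive_interval' hnint
      (by rw [huT]; exact ⟨le_rfl, hT0⟩)
    rwa [huT] at this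
  have hFnonneg : ∀ x ∈ Set.Icc (0:ℝ) T, 0 ≤ F x := by
    intro x hx
    exact intervalIntegral.integral_nonneg hx.1 (fun s _ => norm_nonneg _)
  have hFd : ∀ x ∈ Set.Ico (0:ℝ) T, HasDerivWithinAt F (n x) (Set.Ici x) x := by
    intro x hx
    have hmem : Set.Icc (0:ℝ) T ∈ nhdsWithin x (Set.Ici x) := Icc_mem_nhdsGE_of_mem hx
    have hmem' : Set.Icc (0:ℝ) T ∈ nhdsWithin x (Set.Ioi x) :=
      nhdsWithin_mono x Set.Ioi_subset_Ici_self hmem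
    have hintx : IntervalIntegrable n MeasureTheory.volume 0 x :=
      hnint.mono_set (by rw [huT, Set.uIcc_of_le hx.1]; exact Set.Icc_subset_Icc le_rfl hx.2.le)
    refine intervalIntegral.integral_hasDerivWithinAt_right hintx ?_ ?_
    · exact ⟨Set.Icc 0 T, hmem', hnc.aestronglyMeasurable measurableSet_Icc⟩
    · exact (hnc x ⟨hx.1, hx.2.le⟩).mono_of_mem_nhdsWithin hmem'
  have hgron := norm_le_gronwallBound_of_norm_deriv_right_le (δ := 0) (K := K) (ε := ε)
    hFc hFd (by simp [hFdef]) ?_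
  · -- finish
    intro t ht
    have h1 := main t ht
    have hFt : ∫ s in (0:ℝ)..t, K * ‖V s‖ = K * F t := by
      rw [hFdef]
      exact intervalIntegral.integral_const_mul K n
    rw [hFt] at h1
    have hFb := hgron t ht
    rw [Real.norm_of_nonneg (hFnonneg t ht)] at hFb
    have hfin : ‖V t‖ ≤ ε * Real.exp (K * t) := by
      rcases eq_or_lt_of_le hK0 with hKz | hKpos
      · have : K * F t = 0 := by rw [← hKz]; ring
        rw [this] at h1
        have : (1:ℝ) ≤ Real.exp (K * t) := by
          apply Real.one_le_exp
          exact mul_nonneg hK0 ht.1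
        nlinarith
      · have hgb : gronwallBound 0 K ε (t - 0) =
            ε / K * (Real.exp (K * t) - 1) := by
          rw [gronwallBound_of_K_ne_0 (ne_of_gt hKpos)]
          ring_nf
        rw [hgb] at hFb
        have : K * F t ≤ K * (ε / K * (Real.exp (K * t) - 1)) :=
          mul_le_mul_of_nonneg_left hFb hK0
        have hKne : K ≠ 0 := ne_of_gt hKpos
        rw [← mul_assoc, mul_div_cancel₀ ε hKne] at this
        nlinarith [this, h1]
    have hV0 : V 0 = B * P₀ + P₀ * A + Q - P₀ * S * P₀ := by rw [hVdef]; simp [hP0]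
    calc ‖V t‖ ≤ ε * Real.exp (K * t) := hfin
    _ = C * ‖B * P₀ + P₀ * A + Q - P₀ * S * P₀‖ * Real.exp (2 * C * γ * ‖S‖ * t) := by
        rw [hεdef, hV0, hKdef]
  · -- Grönwall bound hypothesis
    intro x hx
    have h1 := main x ⟨hx.1, hx.2.le⟩
    have hFx : ∫ s in (0:ℝ)..x, K * ‖V s‖ = K * F x := by
      rw [hFdef]
      exact intervalIntegral.integral_const_mul K n
    rw [hFx] at h1
    rw [Real.norm_of_nonneg (norm_nonneg _), Real.norm_of_nonneg (hFnonneg x ⟨hx.1, hx.2.le⟩)]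
    linarith
end
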